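/- Let V be a Hilbert space, a(·,·) symmetric continuous coercive, ℓ ∈ V', and T₁,…,T_N ∈ V' linearly independent. Let u be the minimizer of J(v) = ½ a(v,v) − ℓ(v) subject to T_i u = b_i. Then the minimal value satisfies J(u) = ½ (b − Tφ₀)ᵀ A⁻¹ (b − Tφ₀) − ½ a(φ₀, φ₀), where φ₀ solves a(φ₀,·) = ℓ, A = (a(φ_i, φ_j)) is the Gramian of the representers a(φ_i,·) = T_i, and Tφ₀ = (T_i φ₀)_i. -/

import Mathlib

open Matrix

/-- the minimal value of the finite dimensionally constrained problem is
`J(u) = ½ (b − Tφ₀)ᵀ A⁻¹ (b − Tφ₀) − ½ a(φ₀,φ₀)`. -/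
theorem stmt3
    {V : Type*} [NormedAddCommGroup V] [InnerProductSpace ℝ V] [CompleteSpace V]
    (a : V →ₗ[ℝ] V →ₗ[ℝ] ℝ) (hsymm : ∀ v w, a v w = a w v)
    (γ Γ : ℝ) (hγ : 0 < γ) (hΓ : 0 < Γ)
    (hcoer : ∀ v, γ * ‖v‖ ^ 2 ≤ a v v)
    (hbound : ∀ v w, a v w ≤ Γ * ‖v‖ * ‖w‖)
    (ℓ : V →L[ℝ] ℝ)
    (J : V → ℝ) (hJ : ∀ v, J v = (1 / 2) * a v v - ℓ v)
    {N : ℕ} (T : Fin N → V →L[ℝ] ℝ) (hT : LinearIndependent ℝ T)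
    (b : Fin N → ℝ)
    (φ₀ : V) (hφ₀ : ∀ v, a φ₀ v = ℓ v)
    (φ : Fin N → V) (hφ : ∀ i v, a (φ i) v = T i v)
    (A : Matrix (Fin N) (Fin N) ℝ) (hA : ∀ i j, A i j = a (φ i) (φ j))
    -- u : the minimizer of J subject to the constraints Tᵢ u = bᵢ
    (u : V) (hu_con : ∀ i, T i u = b i)
    (hu_min : ∀ v : V, (∀ i, T i v = b i) → J u ≤ J v) :
    J u = (1 / 2) * ((fun i => b i - T i φ₀) ⬝ᵥ
        A⁻¹.mulVec (fun i => b i - T i φ₀)) - (1 / 2) * a φ₀ φ₀ := by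
  classical
  set w : V := u - φ₀ with hw
  set c : Fin N → ℝ := fun i => b i - T i φ₀ with hc
  have hnn : ∀ v : V, 0 ≤ a v v := fun v => le_trans (by positivity) (hcoer v)
  have hzero : ∀ v : V, a v v = 0 → v = 0 := by
    intro v hv
    have h1 := hcoer v
    have h2 : ‖v‖ ^ 2 = 0 := le_antisymm (by nlinarith) (by positivity)
    exact norm_eq_zero.mp (pow_eq_zero_iff two_ne_zero |>.mp h2)
  -- variational equation on the kernel of constraints
  have hvar : ∀ v : V, (∀ i, T i v = 0) → a u v = ℓ v := by
    intro v hv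
    have key : ∀ t : ℝ, 0 ≤ t * (a u v - ℓ v) + t ^ 2 / 2 * a v v := by
      intro t
      have hmin := hu_min (u + t • v) (fun i => by
        simp [map_add, _root_.map_smul, hv i, hu_con i])
      rw [hJ, hJ] at hmin
      simp only [map_add, _root_.map_smul, LinearMap.add_apply, LinearMap.smul_apply,
        smul_eq_mul] at hmin
      rw [hsymm v u] at hmin
      nlinarith [hmin]
    set d : ℝ := a u v - ℓ v with hd
    have hq : 0 ≤ a v v := hnn v
    have h1 : (0:ℝ) < a v v + 1 := by linarith
    have ht := key (-(d / (a v v + 1)))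
    have hdz : d = 0 := by
      by_contra h
      have hd2 : 0 < d ^ 2 := by positivity
      have expand : -(d / (a v v + 1)) * d + (-(d / (a v v + 1))) ^ 2 / 2 * a v v
          = -(d ^ 2) / (a v v + 1) + d ^ 2 * a v v / (2 * (a v v + 1) ^ 2) := by
        field_simp
      rw [expand] at ht
      have hlt : -(d ^ 2) / (a v v + 1) + d ^ 2 * a v v / (2 * (a v v + 1) ^ 2) < 0 := by
        rw [div_add_div _ _ (ne_of_gt h1) (by positivity : (2 * (a v v + 1) ^ 2) ≠ 0)]
        apply div_neg_of_neg_of_pos _ (by positivity)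
        nlinarith
      linarith
    linarith
  -- a w vanishes on ⋂ ker Tᵢ
  have hker : ⨅ i, LinearMap.ker ((T i : V →ₗ[ℝ] ℝ)) ≤ LinearMap.ker (a w) := by
    intro v hv
    simp only [Submodule.mem_iInf, LinearMap.mem_ker, ContinuousLinearMap.coe_coe] at hv
    have h1 : a u v = ℓ v := hvar v hv
    have h0 : a φ₀ v = ℓ v := hφ₀ v
    simp only [LinearMap.mem_ker, hw, map_sub, LinearMap.sub_apply]
    rw [h1, h0]; ring
  have hmem := mem_span_of_iInf_ker_le_ker hker
  rw [Submodule.mem_span_range_iff_exists_fun] at hmem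
  obtain ⟨lam, hlam⟩ := hmem
  have haw : ∀ v : V, a w v = ∑ i, lam i * T i v := by
    intro v
    have := congrFun (congrArg (DFunLike.coe) hlam) v
    simpa [LinearMap.coe_sum, Finset.sum_apply] using this.symm
  -- w = ∑ lam i • φ i
  have hwsum : w = ∑ i, lam i • φ i := by
    set z : V := w - ∑ i, lam i • φ i with hz
    have hzv : a z z = 0 := by
      have h1 : ∀ v : V, a z v = 0 := by
        intro v
        have h2 : a z v = a w v - ∑ i, lam i * T i v := by
          simp only [hz, map_sub, map_sum, _root_.map_smul, LinearMap.sub_apply,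
            LinearMap.sum_apply, LinearMap.smul_apply, smul_eq_mul, hφ]
        rw [h2, haw v, sub_self]
      exact h1 z
    have := hzero z hzv
    exact sub_eq_zero.mp this
  -- a (φ i) w = c i
  have hphiw : ∀ i, a (φ i) w = c i := by
    intro i
    rw [hφ i w, hw, map_sub, hu_con i]
  -- A.mulVec lam = c
  have hAlam : A.mulVec lam = c := by
    funext i
    have h1 : a (φ i) w = ∑ j, lam j * a (φ i) (φ j) := by
      nth_rewrite 1 [hwsum]
      simp only [map_sum, _root_.map_smul, smul_eq_mul]
    rw [hphiw i] at h1
    simp only [Matrix.mulVec, dotProduct]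
    rw [h1]
    exact Finset.sum_congr rfl fun j _ => by rw [hA i j]; ring
  -- A is positive definite
  have hApos : A.PosDef := by
    refine Matrix.posDef_iff_dotProduct_mulVec.mpr ⟨?_, ?_⟩
    · ext i j
      simp only [Matrix.conjTranspose_apply, star_trivial, hA i j, hA j i, hsymm]
    · intro x hx
      set s : V := ∑ i, x i • φ i with hs
      have hsx : star x ⬝ᵥ A.mulVec x = a s s := by
        simp only [star_trivial, Matrix.mulVec, dotProduct, hs, map_sum,
          _root_.map_smul, LinearMap.sum_apply, LinearMap.smul_apply, smul_eq_mul,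
          Finset.mul_sum]
        refine Finset.sum_congr rfl fun i _ => Finset.sum_congr rfl fun j _ => ?_
        rw [hA i j, hsymm (φ i) (φ j)]; ring
      have hs0 : s ≠ 0 := by
        intro h
        apply hx
        have hTz : ∀ v : V, ∑ i, x i * T i v = 0 := by
          intro v
          have : a s v = 0 := by rw [h]; simp
          rw [hs] at this
          simpa only [map_sum, _root_.map_smul, LinearMap.sum_apply, LinearMap.smul_apply,
            smul_eq_mul, hφ] using this
        have hsum : ∑ i, x i • T i = 0 := by
          ext v
          simpa using hTz v
        funext i
        exact Fintype.linearIndependent_iff.mp hT x hsum i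
      have hpos : 0 < a s s := by
        have h2 : 0 < ‖s‖ := norm_pos_iff.mpr hs0
        calc (0:ℝ) < γ * ‖s‖ ^ 2 := by positivity
          _ ≤ a s s := hcoer s
      rw [hsx]
      simpa using hpos
  -- lam = A⁻¹ c
  have hinv : A⁻¹ * A = 1 :=
    Matrix.nonsing_inv_mul A ((Matrix.isUnit_iff_isUnit_det A).mp hApos.isUnit)
  have hlamc : A⁻¹.mulVec c = lam := by
    rw [← hAlam, Matrix.mulVec_mulVec, hinv, Matrix.one_mulVec]
  -- a w w
  have haww : a w w = ∑ i, lam i * c i := by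
    nth_rewrite 1 [hwsum]
    simp only [map_sum, _root_.map_smul, LinearMap.sum_apply, LinearMap.smul_apply,
      smul_eq_mul]
    exact Finset.sum_congr rfl fun i _ => by rw [hphiw i]
  -- final computation of J u
  have hu2 : u = φ₀ + w := by rw [hw]; abel
  have e1 : ℓ (φ₀ + w) = a φ₀ φ₀ + a φ₀ w := by
    rw [← hφ₀ (φ₀ + w)]; simp [map_add]
  have e2 : a (φ₀ + w) (φ₀ + w) = a φ₀ φ₀ + 2 * a φ₀ w + a w w := by
    simp only [map_add, LinearMap.add_apply]
    rw [hsymm w φ₀]; ring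
  have hJu : J u = (1 / 2) * a w w - (1 / 2) * a φ₀ φ₀ := by
    rw [hJ u, hu2, e1, e2]; ring
  have hdot : c ⬝ᵥ A⁻¹.mulVec c = ∑ i, lam i * c i := by
    rw [hlamc]
    simp only [dotProduct]
    exact Finset.sum_congr rfl fun i _ => mul_comm _ _
  rw [hJu, hdot, haww]
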